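/- For every integer n > 1, let G*' be obtained from G* by adding an edge between the vertices E and F. Then the metric dimension of G*' is at least n − 2. (Consequently, adding a single edge to G* increases the metric dimension by at least n − ⌈log₂(n)⌉ − 3.) -/

import Mathlib

/-- A set `R` of vertices resolves the graph `H` if every pair of distinct
vertices is distinguished by some vertex of `R`. -/
def resolves {V : Type*} (H : SimpleGraph V) (R : Set V) : Prop :=
  ∀ a b : V, a ≠ b → ∃ x ∈ R, H.dist a x ≠ H.dist b x

/-- The metric dimension: the least cardinality of a (finite) resolving set. -/
noncomputable def metricDim {V : Type*} (H : SimpleGraph V) : ℕ :=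
  sInf {k | ∃ R : Finset V, R.card = k ∧ resolves H (R : Set V)}

/-- The vertices of the graph `G*`: `⌈log₂ n⌉` level-0 vertices, levels 1–3 with
`n − 1` vertices each (`mid l i` is the vertex of level `l+1` with index `i+1`),
and the two special vertices `E` and `F`. -/
inductive GStarV (n : ℕ) where
  | lvl0 (j : Fin (Nat.clog 2 n))
  | mid (l : Fin 3) (i : Fin (n - 1))
  | E
  | F
  deriving DecidableEq

/-- The (asymmetric) edge relation of `G*`: `F` is joined to every level-0 vertex;
the level-0 vertex `j` is joined to the level-1 vertex of index `i` iff the `j`-th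
bit of the binary representation of `i` is 1; consecutive mid levels are joined at
equal indices; and every level-3 vertex is joined to `E`. -/
def gstarRel (n : ℕ) : GStarV n → GStarV n → Prop
  | .F, .lvl0 _ => True
  | .lvl0 j, .mid l i => (l : ℕ) = 0 ∧ Nat.testBit (i + 1) j = true
  | .mid l i, .mid l' i' => i = i' ∧ (l' : ℕ) = (l : ℕ) + 1
  | .mid l _, .E => (l : ℕ) = 2
  | _, _ => False

/-- The graph `G*`. -/
def GStar (n : ℕ) : SimpleGraph (GStarV n) where
  Adj a b := gstarRel n a b ∨ gstarRel n b a
  symm := ⟨fun _ _ h => Or.symm h⟩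
  loopless := ⟨by
    rintro a (h | h) <;> cases a <;> simp [gstarRel] at h⟩

/-- The graph `G*'`: `G*` together with the extra edge joining `E` and `F`. -/
def GStar' (n : ℕ) : SimpleGraph (GStarV n) :=
  GStar n ⊔ SimpleGraph.fromEdgeSet {s((GStarV.E : GStarV n), GStarV.F)}

namespace StarProof

open SimpleGraph GStarV

variable {n : ℕ}

/-- Lipschitz functions bound walks from below. -/
lemma lip_le_walk {V : Type*} {H : SimpleGraph V} {h : V → ℕ}
    (hlip : ∀ a b, H.Adj a b → h b ≤ h a + 1) :
    ∀ {a b : V} (w : H.Walk a b), h b ≤ h a + w.length := by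
  intro a b w
  induction w with
  | nil => simp
  | cons hadj w ih =>
    have := hlip _ _ hadj
    simp only [SimpleGraph.Walk.length_cons]
    omega

lemma dist_eq_of {V : Type*} {H : SimpleGraph V} (h : V → ℕ)
    (hlip : ∀ a b, H.Adj a b → h b ≤ h a + 1) {a b : V} (ha : h a = 0)
    (w : H.Walk a b) (hw : w.length = h b) : H.dist a b = h b := by
  refine le_antisymm (hw ▸ SimpleGraph.dist_le w) ?_
  obtain ⟨p, hp⟩ := SimpleGraph.Reachable.exists_walk_length_eq_dist ⟨w⟩
  have := lip_le_walk hlip p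
  omega

-- adjacency lemmas
lemma adj_Fl (j : Fin (Nat.clog 2 n)) : (GStar n).Adj .F (.lvl0 j) := Or.inl trivial

lemma adj_lm (j : Fin (Nat.clog 2 n)) (k : Fin (n-1))
    (hbit : Nat.testBit ((k : ℕ) + 1) (j : ℕ) = true) :
    (GStar n).Adj (.lvl0 j) (.mid 0 k) := Or.inl ⟨rfl, hbit⟩

lemma adj_mm (l l' : Fin 3) (k : Fin (n-1)) (h : (l' : ℕ) = (l : ℕ) + 1) :
    (GStar n).Adj (.mid l k) (.mid l' k) := Or.inl ⟨rfl, h⟩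

lemma adj_mE (l : Fin 3) (k : Fin (n-1)) (h : (l : ℕ) = 2) :
    (GStar n).Adj (.mid l k) .E := Or.inl h

lemma adj'_of {a b : GStarV n} (h : (GStar n).Adj a b) : (GStar' n).Adj a b :=
  (SimpleGraph.sup_adj _ _ _ _).mpr (Or.inl h)

lemma adj'_EF : (GStar' n).Adj .E .F :=
  (SimpleGraph.sup_adj _ _ _ _).mpr (Or.inr ((SimpleGraph.fromEdgeSet_adj _).mpr
    ⟨Set.mem_singleton _, fun h => by cases h⟩))

lemma adj'_cases {a b : GStarV n} (h : (GStar' n).Adj a b) :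
    (gstarRel n a b ∨ gstarRel n b a) ∨ ((a = .E ∧ b = .F) ∨ (a = .F ∧ b = .E)) := by
  rcases (SimpleGraph.sup_adj _ _ _ _).mp h with h | h
  · exact Or.inl h
  · obtain ⟨h1, -⟩ := (SimpleGraph.fromEdgeSet_adj _).mp h
    rw [Set.mem_singleton_iff, Sym2.eq_iff] at h1
    exact Or.inr h1

lemma exists_bit (hn : 1 < n) (k : Fin (n - 1)) :
    ∃ j : Fin (Nat.clog 2 n), Nat.testBit ((k : ℕ) + 1) (j : ℕ) = true := by
  have hlt : (k : ℕ) + 1 < 2 ^ Nat.clog 2 n := by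
    have := k.is_lt
    have := Nat.le_pow_clog (b := 2) one_lt_two n
    omega
  by_contra hc
  push_neg at hc
  have : (k : ℕ) + 1 = 0 := by
    apply Nat.eq_of_testBit_eq
    intro j
    simp only [Nat.zero_testBit]
    by_cases hj : j < Nat.clog 2 n
    · simpa using hc ⟨j, hj⟩
    · exact Nat.testBit_lt_two_pow
        (lt_of_lt_of_le hlt (Nat.pow_le_pow_right (by norm_num) (le_of_not_gt hj)))
  omega


/-- claimed distances from `mid 2 i` in `G*'` -/
def hA (i : Fin (n-1)) : GStarV n → ℕ
  | .lvl0 _ => 3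
  | .mid l k => if k = i then 2 - (l : ℕ) else 4 - (l : ℕ)
  | .E => 1
  | .F => 2

lemma lipA (i : Fin (n-1)) :
    ∀ a b : GStarV n, (GStar' n).Adj a b → hA i b ≤ hA i a + 1 := by
  intro a b hab
  rcases adj'_cases hab with (h | h) | (⟨rfl, rfl⟩ | ⟨rfl, rfl⟩)
  · cases a <;> cases b <;> simp only [gstarRel] at h <;> simp only [hA] <;>
      first
        | omega
        | (obtain ⟨rfl, h⟩ := h; split_ifs <;> omega)
        | (obtain ⟨h, -⟩ := h; split_ifs <;> omega)
        | (split_ifs <;> omega)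
  · cases a <;> cases b <;> simp only [gstarRel] at h <;> simp only [hA] <;>
      first
        | omega
        | (obtain ⟨rfl, h⟩ := h; split_ifs <;> omega)
        | (obtain ⟨h, -⟩ := h; split_ifs <;> omega)
        | (split_ifs <;> omega)
  · simp [hA]
  · simp [hA]


lemma distA (hn : 1 < n) (i : Fin (n-1)) (x : GStarV n) (hx : ∀ l, x ≠ .mid l i) :
    (GStar' n).dist (.mid 2 i) x = hA i x := by
  have ha : hA i (.mid 2 i) = 0 := by simp [hA]
  cases x with
  | E =>
    exact dist_eq_of (hA i) (lipA i) ha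
      (Walk.cons (adj'_of (adj_mE 2 i rfl)) Walk.nil) (by simp [hA])
  | F =>
    exact dist_eq_of (hA i) (lipA i) ha
      (Walk.cons (adj'_of (adj_mE 2 i rfl)) (Walk.cons adj'_EF Walk.nil)) (by simp [hA])
  | lvl0 j =>
    exact dist_eq_of (hA i) (lipA i) ha
      (Walk.cons (adj'_of (adj_mE 2 i rfl)) (Walk.cons adj'_EF
        (Walk.cons (adj'_of (adj_Fl j)) Walk.nil))) (by simp [hA])
  | mid l k =>
    have hk : k ≠ i := fun h => hx l (by rw [h])
    fin_cases l
    · obtain ⟨j, hbit⟩ := exists_bit hn k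
      exact dist_eq_of (hA i) (lipA i) ha
        (Walk.cons (adj'_of (adj_mE 2 i rfl)) (Walk.cons adj'_EF
          (Walk.cons (adj'_of (adj_Fl j)) (Walk.cons (adj'_of (adj_lm j k hbit)) Walk.nil))))
        (by simp [hA, hk])
    · exact dist_eq_of (hA i) (lipA i) ha
        (Walk.cons (adj'_of (adj_mE 2 i rfl)) (Walk.cons (adj'_of (adj_mE 2 k rfl)).symm
          (Walk.cons (adj'_of (adj_mm 1 2 k rfl)).symm Walk.nil)))
        (by simp [hA, hk])
    · exact dist_eq_of (hA i) (lipA i) ha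
        (Walk.cons (adj'_of (adj_mE 2 i rfl)) (Walk.cons (adj'_of (adj_mE 2 k rfl)).symm
          Walk.nil))
        (by simp [hA, hk])


instance : Fintype (GStarV n) := by
  classical
  apply Fintype.ofSurjective
    (fun x : Fin (Nat.clog 2 n) ⊕ (Fin 3 × Fin (n-1)) ⊕ Bool =>
      match x with
      | .inl j => GStarV.lvl0 j
      | .inr (.inl (l, i)) => GStarV.mid l i
      | .inr (.inr true) => GStarV.E
      | .inr (.inr false) => GStarV.F)
  intro y
  cases y with
  | lvl0 j => exact ⟨.inl j, rfl⟩
  | mid l i => exact ⟨.inr (.inl (l, i)), rfl⟩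
  | E => exact ⟨.inr (.inr true), rfl⟩
  | F => exact ⟨.inr (.inr false), rfl⟩

lemma reachE (hn : 1 < n) (v : GStarV n) : (GStar' n).Reachable v .E := by
  cases v with
  | E => rfl
  | F => exact ⟨Walk.cons adj'_EF.symm Walk.nil⟩
  | lvl0 j => exact ⟨Walk.cons (adj'_of (adj_Fl j)).symm (Walk.cons adj'_EF.symm Walk.nil)⟩
  | mid l k =>
    have w3 : (GStar' n).Walk (.mid 2 k) .E := Walk.cons (adj'_of (adj_mE 2 k rfl)) Walk.nil
    fin_cases l
    · exact ⟨Walk.cons (adj'_of (adj_mm 0 1 k rfl)) (Walk.cons (adj'_of (adj_mm 1 2 k rfl)) w3)⟩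
    · exact ⟨Walk.cons (adj'_of (adj_mm 1 2 k rfl)) w3⟩
    · exact ⟨w3⟩

lemma univ_resolves (hn : 1 < n) :
    resolves (GStar' n) ((Finset.univ : Finset (GStarV n)) : Set (GStarV n)) := by
  intro a b hab
  refine ⟨a, by simp, ?_⟩
  rw [SimpleGraph.dist_self]
  have : (GStar' n).dist b a ≠ 0 :=
    SimpleGraph.dist_ne_zero_iff_ne_and_reachable.mpr
      ⟨hab.symm, (reachE hn b).trans (reachE hn a).symm⟩
  omega

lemma card_bound (hn : 1 < n) (R : Finset (GStarV n))
    (hR : resolves (GStar' n) (R : Set (GStarV n))) : n - 2 ≤ R.card := by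
  classical
  set P : Fin (n-1) → Prop := fun i => ∃ x, x ∈ R ∧ ∃ l, x = GStarV.mid l i with hP
  have key : ∀ i i' : Fin (n-1), i ≠ i' → P i ∨ P i' := by
    intro i i' hii
    have hne : (GStarV.mid 2 i : GStarV n) ≠ GStarV.mid 2 i' := by
      intro h; injection h with h1 h2; exact hii h2
    obtain ⟨x, hxR, hxd⟩ := hR (.mid 2 i) (.mid 2 i') hne
    by_contra hc
    push_neg at hc
    obtain ⟨hci, hci'⟩ := hc
    have h1 : ∀ l, x ≠ GStarV.mid l i := by
      intro l he; exact hci ⟨x, by simpa using hxR, l, he⟩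
    have h2 : ∀ l, x ≠ GStarV.mid l i' := by
      intro l he; exact hci' ⟨x, by simpa using hxR, l, he⟩
    have hAA : hA i x = hA i' x := by
      cases x with
      | mid l k =>
        have hk : k ≠ i := fun h => h1 l (by rw [h])
        have hk' : k ≠ i' := fun h => h2 l (by rw [h])
        simp [hA, hk, hk']
      | lvl0 j => rfl
      | E => rfl
      | F => rfl
    rw [distA hn i x h1, distA hn i' x h2] at hxd
    exact hxd hAA
  set S : Finset (Fin (n-1)) := Finset.univ.filter P with hS
  set T : Finset (Fin (n-1)) := Finset.univ.filter (fun i => ¬ P i) with hT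
  have hTcard : T.card ≤ 1 := by
    rw [Finset.card_le_one]
    intro a ha b hb
    by_contra hne
    rcases key a b hne with h | h
    · exact (Finset.mem_filter.mp ha).2 h
    · exact (Finset.mem_filter.mp hb).2 h
  have hsum : S.card + T.card = n - 1 := by
    rw [hS, hT, Finset.card_filter_add_card_filter_not]
    simp
  have hSR : S.card ≤ R.card := by
    have hsel : ∀ i : Fin (n-1), P i → ∃ x, x ∈ R ∧ ∃ l, x = GStarV.mid l i := fun i h => h
    refine Finset.card_le_card_of_injOn
      (fun i => if h : P i then h.choose else GStarV.E) ?_ ?_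
    · intro i hi
      have hp : P i := (Finset.mem_filter.mp hi).2
      simp only [dif_pos hp]
      exact hp.choose_spec.1
    · intro i hi i' hi' heq
      have hp : P i := (Finset.mem_filter.mp (by exact hi)).2
      have hp' : P i' := (Finset.mem_filter.mp (by exact hi')).2
      dsimp only at heq
      rw [dif_pos hp, dif_pos hp'] at heq
      obtain ⟨l, hl⟩ := hp.choose_spec.2
      obtain ⟨l', hl'⟩ := hp'.choose_spec.2
      rw [hl, hl'] at heq
      injection heq with h1 h2
      try exact h2
  omega

lemma part1 (hn : 1 < n) : n - 2 ≤ metricDim (GStar' n) := by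
  have hne : {k | ∃ R : Finset (GStarV n), R.card = k ∧ resolves (GStar' n) (R : Set (GStarV n))}.Nonempty :=
    ⟨(Finset.univ : Finset (GStarV n)).card, Finset.univ, rfl, univ_resolves hn⟩
  obtain ⟨R, hRc, hRr⟩ := Nat.sInf_mem hne
  rw [metricDim, ← hRc]
  exact card_bound hn R hRr


/-- claimed distances from `E` in `G*` -/
def hE : GStarV n → ℕ
  | .lvl0 _ => 4
  | .mid l _ => 2 - (l : ℕ) + 1
  | .E => 0
  | .F => 5

lemma lipB : ∀ a b : GStarV n, (GStar n).Adj a b → hE b ≤ hE a + 1 := by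
  rintro a b (h | h) <;>
    cases a <;> cases b <;> simp only [gstarRel] at h <;> simp only [hE] <;>
      first
        | omega
        | (obtain ⟨rfl, h⟩ := h; omega)
        | (obtain ⟨h, -⟩ := h; omega)

lemma pow_sub_one_lt (hn : 1 < n) (j : Fin (Nat.clog 2 n)) : 2 ^ (j : ℕ) - 1 < n - 1 := by
  have hj : (j : ℕ) ≤ Nat.clog 2 n - 1 := by have := j.is_lt; omega
  have h1 : 2 ^ (j : ℕ) ≤ 2 ^ (Nat.clog 2 n - 1) := Nat.pow_le_pow_right (by norm_num) hj
  have h2 : 2 ^ (Nat.clog 2 n - 1) < n := Nat.pow_pred_clog_lt_self one_lt_two hn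
  have h3 : 0 < 2 ^ (j : ℕ) := Nat.pow_pos (by norm_num)
  omega

lemma distB (hn : 1 < n) (x : GStarV n) : (GStar n).dist .E x = hE x := by
  have ha : hE (.E : GStarV n) = 0 := rfl
  cases x with
  | E => exact dist_eq_of hE lipB ha Walk.nil rfl
  | F =>
    have hc : 0 < Nat.clog 2 n := Nat.clog_pos one_lt_two hn
    set p : Fin (n-1) := ⟨0, by omega⟩
    set j0 : Fin (Nat.clog 2 n) := ⟨0, hc⟩
    have hbit : Nat.testBit ((p : ℕ) + 1) (j0 : ℕ) = true := Nat.testBit_two_pow_self (n := 0)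
    exact dist_eq_of hE lipB ha
      (Walk.cons (adj_mE 2 p rfl).symm (Walk.cons (adj_mm 1 2 p rfl).symm
        (Walk.cons (adj_mm 0 1 p rfl).symm (Walk.cons (adj_lm j0 p hbit).symm
          (Walk.cons (adj_Fl j0).symm Walk.nil))))) (by simp [hE])
  | lvl0 j =>
    set p : Fin (n-1) := ⟨2 ^ (j : ℕ) - 1, pow_sub_one_lt hn j⟩
    have hp1 : (p : ℕ) + 1 = 2 ^ (j : ℕ) := by
      have : 0 < 2 ^ (j : ℕ) := Nat.pow_pos (by norm_num)
      simp only [p]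
      omega
    have hbit : Nat.testBit ((p : ℕ) + 1) (j : ℕ) = true := by
      rw [hp1]; exact Nat.testBit_two_pow_self
    exact dist_eq_of hE lipB ha
      (Walk.cons (adj_mE 2 p rfl).symm (Walk.cons (adj_mm 1 2 p rfl).symm
        (Walk.cons (adj_mm 0 1 p rfl).symm (Walk.cons (adj_lm j p hbit).symm
          Walk.nil)))) (by simp [hE])
  | mid l k =>
    fin_cases l
    · exact dist_eq_of hE lipB ha
        (Walk.cons (adj_mE 2 k rfl).symm (Walk.cons (adj_mm 1 2 k rfl).symm
          (Walk.cons (adj_mm 0 1 k rfl).symm Walk.nil))) (by simp [hE])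
    · exact dist_eq_of hE lipB ha
        (Walk.cons (adj_mE 2 k rfl).symm (Walk.cons (adj_mm 1 2 k rfl).symm
          Walk.nil)) (by simp [hE])
    · exact dist_eq_of hE lipB ha
        (Walk.cons (adj_mE 2 k rfl).symm Walk.nil) (by simp [hE])

/-- claimed distances from `lvl0 j` in `G*` -/
def hC (j : Fin (Nat.clog 2 n)) : GStarV n → ℕ
  | .lvl0 j' => if j' = j then 0 else 2
  | .mid l k => (if Nat.testBit ((k : ℕ) + 1) (j : ℕ) then 1 else 3) + (l : ℕ)
  | .E => 4
  | .F => 1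

lemma lipC (j : Fin (Nat.clog 2 n)) :
    ∀ a b : GStarV n, (GStar n).Adj a b → hC j b ≤ hC j a + 1 := by
  rintro a b (h | h) <;>
    cases a <;> cases b <;> simp only [gstarRel] at h <;> simp only [hC] <;>
      first
        | omega
        | (obtain ⟨rfl, h⟩ := h; split_ifs <;> omega)
        | (obtain ⟨h, h'⟩ := h; split_ifs <;> simp_all <;> omega)
        | (split_ifs <;> omega)

lemma distC (hn : 1 < n) (j : Fin (Nat.clog 2 n)) (x : GStarV n) :
    (GStar n).dist (.lvl0 j) x = hC j x := by
  have ha : hC j (.lvl0 j : GStarV n) = 0 := by simp [hC]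
  cases x with
  | lvl0 j' =>
    by_cases hjj : j' = j
    · rw [hjj]
      exact dist_eq_of (hC j) (lipC j) ha Walk.nil (by simp [hC])
    · exact dist_eq_of (hC j) (lipC j) ha
        (Walk.cons (adj_Fl j).symm (Walk.cons (adj_Fl j') Walk.nil)) (by simp [hC, hjj])
  | F =>
    exact dist_eq_of (hC j) (lipC j) ha (Walk.cons (adj_Fl j).symm Walk.nil) (by simp [hC])
  | E =>
    set p : Fin (n-1) := ⟨2 ^ (j : ℕ) - 1, pow_sub_one_lt hn j⟩
    have hp1 : (p : ℕ) + 1 = 2 ^ (j : ℕ) := by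
      have : 0 < 2 ^ (j : ℕ) := Nat.pow_pos (by norm_num)
      simp only [p]
      omega
    have hbit : Nat.testBit ((p : ℕ) + 1) (j : ℕ) = true := by
      rw [hp1]; exact Nat.testBit_two_pow_self
    exact dist_eq_of (hC j) (lipC j) ha
      (Walk.cons (adj_lm j p hbit) (Walk.cons (adj_mm 0 1 p rfl)
        (Walk.cons (adj_mm 1 2 p rfl) (Walk.cons (adj_mE 2 p rfl) Walk.nil))))
      (by simp [hC])
  | mid l k =>
    by_cases hb : Nat.testBit ((k : ℕ) + 1) (j : ℕ) = true
    · fin_cases l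
      · exact dist_eq_of (hC j) (lipC j) ha
          (Walk.cons (adj_lm j k hb) Walk.nil) (by simp [hC, hb])
      · exact dist_eq_of (hC j) (lipC j) ha
          (Walk.cons (adj_lm j k hb) (Walk.cons (adj_mm 0 1 k rfl) Walk.nil))
          (by simp [hC, hb])
      · exact dist_eq_of (hC j) (lipC j) ha
          (Walk.cons (adj_lm j k hb) (Walk.cons (adj_mm 0 1 k rfl)
            (Walk.cons (adj_mm 1 2 k rfl) Walk.nil))) (by simp [hC, hb])
    · obtain ⟨j'', hb''⟩ := exists_bit hn k
      fin_cases l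
      · exact dist_eq_of (hC j) (lipC j) ha
          (Walk.cons (adj_Fl j).symm (Walk.cons (adj_Fl j'')
            (Walk.cons (adj_lm j'' k hb'') Walk.nil))) (by simp [hC, hb])
      · exact dist_eq_of (hC j) (lipC j) ha
          (Walk.cons (adj_Fl j).symm (Walk.cons (adj_Fl j'')
            (Walk.cons (adj_lm j'' k hb'') (Walk.cons (adj_mm 0 1 k rfl) Walk.nil))))
          (by simp [hC, hb])
      · exact dist_eq_of (hC j) (lipC j) ha
          (Walk.cons (adj_Fl j).symm (Walk.cons (adj_Fl j'')
            (Walk.cons (adj_lm j'' k hb'') (Walk.cons (adj_mm 0 1 k rfl)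
              (Walk.cons (adj_mm 1 2 k rfl) Walk.nil))))) (by simp [hC, hb])


lemma bits_differ (k k' : Fin (n-1)) (h : k ≠ k') :
    ∃ j : Fin (Nat.clog 2 n),
      Nat.testBit ((k : ℕ) + 1) (j : ℕ) ≠ Nat.testBit ((k' : ℕ) + 1) (j : ℕ) := by
  by_contra hc
  push_neg at hc
  have hpow : ∀ m : Fin (n-1), (m : ℕ) + 1 < 2 ^ Nat.clog 2 n := by
    intro m
    have := m.is_lt
    have := Nat.le_pow_clog (b := 2) one_lt_two n
    omega
  have heq : (k : ℕ) + 1 = (k' : ℕ) + 1 := by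
    apply Nat.eq_of_testBit_eq
    intro j
    by_cases hj : j < Nat.clog 2 n
    · exact hc ⟨j, hj⟩
    · rw [Nat.testBit_lt_two_pow, Nat.testBit_lt_two_pow] <;>
        exact lt_of_lt_of_le (hpow _)
          (Nat.pow_le_pow_right (by norm_num) (le_of_not_gt hj))
  exact h (Fin.ext (by omega))

/-- the resolving set for `G*`: all level-0 vertices together with `E`. -/
noncomputable def R0 (n : ℕ) : Finset (GStarV n) :=
  (Finset.univ.image (GStarV.lvl0 : Fin (Nat.clog 2 n) → GStarV n)) ∪ {GStarV.E}

lemma R0_card : (R0 n).card = Nat.clog 2 n + 1 := by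
  rw [R0, Finset.card_union_of_disjoint (by simp)]
  rw [Finset.card_image_of_injective _ (fun a b hab => by injection hab)]
  simp

lemma lvl0_mem_R0 (j : Fin (Nat.clog 2 n)) : (GStarV.lvl0 j : GStarV n) ∈ R0 n := by
  simp [R0]

lemma E_mem_R0 : (GStarV.E : GStarV n) ∈ R0 n := by simp [R0]

lemma R0_resolves (hn : 1 < n) : resolves (GStar n) ((R0 n : Finset (GStarV n)) : Set (GStarV n)) := by
  intro a b hab
  by_cases hE0 : (GStar n).dist a .E = (GStar n).dist b .E
  case neg => exact ⟨.E, by simpa using E_mem_R0, hE0⟩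
  case pos =>
  have h1 : (GStar n).dist .E a = (GStar n).dist .E b := by
    rw [SimpleGraph.dist_comm, hE0, SimpleGraph.dist_comm]
  rw [distB hn a, distB hn b] at h1
  cases a with
  | lvl0 ja =>
    cases b with
    | lvl0 jb =>
      have hjj : jb ≠ ja := fun h => hab (by rw [h])
      refine ⟨.lvl0 ja, by simpa using lvl0_mem_R0 ja, ?_⟩
      rw [SimpleGraph.dist_comm, distC hn ja (.lvl0 ja),
        SimpleGraph.dist_comm (v := GStarV.lvl0 ja), distC hn ja (.lvl0 jb)]
      simp [hC, hjj]
    | mid l k => exact absurd h1 (by simp [hE] <;> omega)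
    | E => exact absurd h1 (by simp [hE])
    | F => exact absurd h1 (by simp [hE])
  | mid la ka =>
    cases b with
    | lvl0 jb => exact absurd h1 (by simp [hE] <;> omega)
    | E => exact absurd h1 (by simp [hE] <;> omega)
    | F => exact absurd h1 (by simp [hE] <;> omega)
    | mid lb kb =>
      simp only [hE] at h1
      have hll : la = lb := by
        have h2 := la.is_lt
        have h3 := lb.is_lt
        exact Fin.ext (by omega)
      subst hll
      have hkk : ka ≠ kb := by
        intro h; exact hab (by rw [h])
      obtain ⟨j, hj⟩ := bits_differ ka kb hkk
      refine ⟨.lvl0 j, by simpa using lvl0_mem_R0 j, ?_⟩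
      rw [SimpleGraph.dist_comm, distC hn j (.mid la ka),
        SimpleGraph.dist_comm (v := GStarV.lvl0 j), distC hn j (.mid la kb)]
      simp only [hC]
      rcases Bool.eq_false_or_eq_true (Nat.testBit ((ka : ℕ) + 1) (j : ℕ)) with hb | hb <;>
        rcases Bool.eq_false_or_eq_true (Nat.testBit ((kb : ℕ) + 1) (j : ℕ)) with hb' | hb' <;>
          simp [hb, hb'] at hj ⊢ <;> omega
  | E =>
    cases b with
    | lvl0 jb => exact absurd h1 (by simp [hE])
    | mid lb kb => exact absurd h1 (by simp [hE] <;> omega)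
    | E => exact absurd rfl hab
    | F => exact absurd h1 (by simp [hE])
  | F =>
    cases b with
    | lvl0 jb => exact absurd h1 (by simp [hE])
    | mid lb kb => exact absurd h1 (by simp [hE] <;> omega)
    | E => exact absurd h1 (by simp [hE])
    | F => exact absurd rfl hab

lemma part2 (hn : 1 < n) : metricDim (GStar n) ≤ Nat.clog 2 n + 1 :=
  Nat.sInf_le ⟨R0 n, R0_card, R0_resolves hn⟩

end StarProof

/-- Claim 5: for every `n > 1`, the metric dimension of `G*'` is at least `n − 2`;
consequently adding the single edge `(E,F)` to `G*` increases the metric dimension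
by at least `n − ⌈log₂ n⌉ − 3`. -/
theorem stmt_6 (n : ℕ) (hn : 1 < n) :
    n - 2 ≤ metricDim (GStar' n) ∧
    (n : ℤ) - (Nat.clog 2 n : ℤ) - 3 ≤
      (metricDim (GStar' n) : ℤ) - (metricDim (GStar n) : ℤ) := by
  have h1 := StarProof.part1 hn
  have h2 := StarProof.part2 hn
  exact ⟨h1, by omega⟩
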